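/- arXiv:1402.3119 — 7 statements merged into one kernel-verified Lean document; each statement's English description precedes it below -/
import Mathlib

section
/- Lemma 1 (Triangle sums). Let r ≥ 1 be an integer and let x : V(r) → ℝ be any assignment of real values to the vertices. Then Σ_{v ∈ V(r)} x_v = Σ_{(a,b) ∈ T(r)} (x_{(a,b)} + x_{(a,b+1)} + x_{(a+1,b+1)})/2 + Σ_{v ∈ V_ex(r)} (1 − n_v/2)·x_v. -/
/-- Vertex set of the cellular interference graph: pairs `(a,b)` identified with
the Eisenstein integer `a + bω`, where `ω = (−1+i√3)/2`, satisfying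
`|Re(a+bω)| ≤ r` and `|Im(a+bω)| ≤ (√3/2)r`, i.e. `|2a − b| ≤ 2r` and `|b| ≤ r`. -/
noncomputable def V (r : ℤ) : Finset (ℤ × ℤ) :=
  (Finset.Icc (-(2 * r)) (2 * r) ×ˢ Finset.Icc (-r) r).filter
    (fun p => |2 * p.1 - p.2| ≤ 2 * r ∧ |p.2| ≤ r)

/-- `f(a,b) = (a+b) mod 3`. -/
def f (p : ℤ × ℤ) : ℤ := (p.1 + p.2) % 3

/-- Triangle index set: `(a,b)` with `f(a,b) ≠ 0` such that all three points
`(a,b)`, `(a,b+1)`, `(a+1,b+1)` lie in `V r`. -/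
noncomputable def T (r : ℤ) : Finset (ℤ × ℤ) :=
  (V r).filter (fun p => f p ≠ 0 ∧ (p.1, p.2 + 1) ∈ V r ∧ (p.1 + 1, p.2 + 1) ∈ V r)

/-- The vertex set of the triangle indexed by `p = (a,b)`:
`{(a,b), (a,b+1), (a+1,b+1)}`. -/
def triVerts (p : ℤ × ℤ) : Finset (ℤ × ℤ) := {p, (p.1, p.2 + 1), (p.1 + 1, p.2 + 1)}

/-- The number `n_v` of triangles of `T r` whose vertex set contains `v`. -/
noncomputable def nTri (r : ℤ) (v : ℤ × ℤ) : ℕ := ((T r).filter (fun p => v ∈ triVerts p)).card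

/-- The boundary vertices: those belonging to fewer than two triangles. -/
noncomputable def Vex (r : ℤ) : Finset (ℤ × ℤ) := (V r).filter (fun v => nTri r v < 2)

lemma nTri_le_two (r : ℤ) (v : ℤ × ℤ) : nTri r v ≤ 2 := by
  classical
  set S3 : Finset (ℤ × ℤ) := {(v.1, v.2), (v.1, v.2 - 1), (v.1 - 1, v.2 - 1)} with hS3
  have hsub : (T r).filter (fun p => v ∈ triVerts p) ⊆ S3.filter (fun p => f p ≠ 0) := by
    intro p hp
    simp only [Finset.mem_filter, T, triVerts, Finset.mem_insert, Finset.mem_singleton] at hp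
    obtain ⟨⟨_, hf, _, _⟩, hv⟩ := hp
    simp only [hS3, Finset.mem_filter, Finset.mem_insert, Finset.mem_singleton]
    refine ⟨?_, hf⟩
    rcases hv with h | h | h <;> [left; (right; left); (right; right)] <;>
      · rw [Prod.ext_iff] at h ⊢; constructor <;> omega
  have h3 : S3.card = 3 := by
    simp only [hS3]
    rw [Finset.card_insert_of_notMem, Finset.card_insert_of_notMem, Finset.card_singleton] <;>
      simp [Prod.ext_iff] <;> omega
  have hlt : S3.filter (fun p => f p ≠ 0) ⊂ S3 := by
    rw [Finset.filter_ssubset]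
    have : (v.1 + v.2) % 3 = 0 ∨ (v.1 + (v.2 - 1)) % 3 = 0 ∨ ((v.1 - 1) + (v.2 - 1)) % 3 = 0 := by
      omega
    rcases this with h | h | h
    · exact ⟨(v.1, v.2), by simp [hS3], by simpa [f] using h⟩
    · exact ⟨(v.1, v.2 - 1), by simp [hS3], by simpa [f] using h⟩
    · exact ⟨(v.1 - 1, v.2 - 1), by simp [hS3], by simpa [f] using h⟩
  have := Finset.card_lt_card hlt
  have := Finset.card_le_card hsub
  unfold nTri
  omega

lemma tri_sum (r : ℤ) (x : ℤ × ℤ → ℝ) (p : ℤ × ℤ) (hp : p ∈ T r) :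
    x p + x (p.1, p.2 + 1) + x (p.1 + 1, p.2 + 1) = ∑ v ∈ (V r).filter (· ∈ triVerts p), x v := by
  have hsub : triVerts p ⊆ V r := by
    intro v hv
    simp only [T, Finset.mem_filter] at hp
    simp only [triVerts, Finset.mem_insert, Finset.mem_singleton] at hv
    rcases hv with h | h | h <;> subst h
    · exact hp.1
    · exact hp.2.2.1
    · exact hp.2.2.2
  have : (V r).filter (· ∈ triVerts p) = triVerts p := by
    rw [Finset.filter_mem_eq_inter, Finset.inter_eq_right.mpr hsub]
  rw [this]
  have h1 : p ≠ (p.1, p.2 + 1) := by simp [Prod.ext_iff]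
  have h2 : p ≠ (p.1 + 1, p.2 + 1) := by simp [Prod.ext_iff]
  have h3 : (p.1, p.2 + 1) ≠ (p.1 + 1, p.2 + 1) := by simp [Prod.ext_iff]
  simp [triVerts, Finset.sum_insert, h1, h2, h3]
  ring

/-- **Lemma 1 (Triangle sums).** For any real values `x_v` on the vertices,
`Σ_{v ∈ V(r)} x_v = Σ_{(a,b) ∈ T(r)} (x_{(a,b)} + x_{(a,b+1)} + x_{(a+1,b+1)})/2
  + Σ_{v ∈ V_ex(r)} (1 − n_v/2)·x_v`. -/
theorem triangle_sums (r : ℤ) (hr : 1 ≤ r) (x : ℤ × ℤ → ℝ) :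
    ∑ v ∈ V r, x v =
      (∑ p ∈ T r, (x p + x (p.1, p.2 + 1) + x (p.1 + 1, p.2 + 1)) / 2) +
      ∑ v ∈ Vex r, (1 - (nTri r v : ℝ) / 2) * x v := by
  classical
  have key : ∑ p ∈ T r, (x p + x (p.1, p.2 + 1) + x (p.1 + 1, p.2 + 1)) =
      ∑ v ∈ V r, (nTri r v : ℝ) * x v := by
    rw [Finset.sum_congr rfl (tri_sum r x)]
    rw [Finset.sum_comm' (s := T r) (t := fun p => (V r).filter (· ∈ triVerts p))
      (t' := V r) (s' := fun v => (T r).filter (fun p => v ∈ triVerts p))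
      (by intro p v; simp only [Finset.mem_filter]; tauto)]
    refine Finset.sum_congr rfl fun v hv => ?_
    rw [Finset.sum_const, nTri, nsmul_eq_mul]
  have hVex : ∑ v ∈ Vex r, (1 - (nTri r v : ℝ) / 2) * x v =
      ∑ v ∈ V r, (1 - (nTri r v : ℝ) / 2) * x v := by
    refine Finset.sum_subset (Finset.filter_subset _ _) fun v hv hnv => ?_
    have h2 : ¬ nTri r v < 2 := by
      simp only [Vex, Finset.mem_filter] at hnv
      tauto
    have := nTri_le_two r v
    have : nTri r v = 2 := by omega
    rw [this]
    norm_num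
  rw [hVex, ← Finset.sum_div, key, Finset.sum_div, ← Finset.sum_add_distrib]
  refine Finset.sum_congr rfl fun v hv => ?_
  ring
end

section
/- Cardinality of the triangle set: for every integer r ≥ 2, |T(r)| = r·(4r − ⌊(r−2)/3⌋ − 2⌊(r−1)/3⌋ − ⌊(r+1)/3⌋ − 3). -/
noncomputable def U (r : ℤ) : Finset (ℤ × ℤ) :=
  (Finset.Icc (1 - 2 * r) (2 * r - 1) ×ˢ Finset.Icc (-r) (r - 1)).filter
    (fun q => q.1 % 2 = q.2 % 2 ∧ q.1 % 6 ≠ 3 * (q.2 % 2))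

lemma mem_V {r : ℤ} {p : ℤ × ℤ} :
    p ∈ V r ↔ (-(2*r) ≤ p.1 ∧ p.1 ≤ 2*r) ∧ (-r ≤ p.2 ∧ p.2 ≤ r) ∧
      (-(2*r) ≤ 2*p.1 - p.2 ∧ 2*p.1 - p.2 ≤ 2*r) := by
  simp only [V, Finset.mem_filter, Finset.mem_product, Finset.mem_Icc, abs_le]
  tauto

lemma mem_T {r : ℤ} {p : ℤ × ℤ} :
    p ∈ T r ↔ p ∈ V r ∧ (p.1 + p.2) % 3 ≠ 0 ∧ (p.1, p.2+1) ∈ V r ∧ (p.1+1, p.2+1) ∈ V r := by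
  simp [T, f, Finset.mem_filter]

lemma mem_U {r : ℤ} {q : ℤ × ℤ} :
    q ∈ U r ↔ (1 - 2*r ≤ q.1 ∧ q.1 ≤ 2*r - 1) ∧ (-r ≤ q.2 ∧ q.2 ≤ r - 1) ∧
      q.1 % 2 = q.2 % 2 ∧ q.1 % 6 ≠ 3 * (q.2 % 2) := by
  simp only [U, Finset.mem_filter, Finset.mem_product, Finset.mem_Icc]
  tauto

lemma count6 (lo hi c : ℤ) (hc0 : 0 ≤ c) (hc6 : c < 6) :
    (((Finset.Icc lo hi).filter (fun u => u % 6 = c)).card : ℤ)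
      = max 0 ((hi - c) / 6 - (lo - c + 5) / 6 + 1) := by
  rw [Finset.card_nbij' (i := fun u => (u - c) / 6) (j := fun t => 6 * t + c)
      (t := Finset.Icc ((lo - c + 5) / 6) ((hi - c) / 6))
      (fun u hu => by simp only [Finset.mem_coe, Finset.mem_filter, Finset.mem_Icc] at *; omega)
      (fun t ht => by simp only [Finset.mem_coe, Finset.mem_filter, Finset.mem_Icc] at *; omega)
      (fun u hu => by dsimp only; simp only [Finset.mem_coe, Finset.mem_filter, Finset.mem_Icc] at hu; omega)
      (fun t ht => by dsimp only; simp only [Finset.mem_coe, Finset.mem_Icc] at ht; omega)]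
  rw [Int.card_Icc]
  omega

lemma count2 (lo hi c : ℤ) (hc0 : 0 ≤ c) (hc2 : c < 2) :
    (((Finset.Icc lo hi).filter (fun u => u % 2 = c)).card : ℤ)
      = max 0 ((hi - c) / 2 - (lo - c + 1) / 2 + 1) := by
  rw [Finset.card_nbij' (i := fun u => (u - c) / 2) (j := fun t => 2 * t + c)
      (t := Finset.Icc ((lo - c + 1) / 2) ((hi - c) / 2))
      (fun u hu => by simp only [Finset.mem_coe, Finset.mem_filter, Finset.mem_Icc] at *; omega)
      (fun t ht => by simp only [Finset.mem_coe, Finset.mem_filter, Finset.mem_Icc] at *; omega)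
      (fun u hu => by dsimp only; simp only [Finset.mem_coe, Finset.mem_filter, Finset.mem_Icc] at hu; omega)
      (fun t ht => by dsimp only; simp only [Finset.mem_coe, Finset.mem_Icc] at ht; omega)]
  rw [Int.card_Icc]
  omega


/-- Cardinality of the triangle set: for `r ≥ 2`,
`|T(r)| = r·(4r − ⌊(r−2)/3⌋ − 2⌊(r−1)/3⌋ − ⌊(r+1)/3⌋ − 3)`.
(The arguments of the divisions are nonnegative, so integer division is floor.) -/
theorem card_T (r : ℤ) (hr : 2 ≤ r) :
    ((T r).card : ℤ) =
      r * (4 * r - (r - 2) / 3 - 2 * ((r - 1) / 3) - (r + 1) / 3 - 3) := by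
  -- step 1: |T r| = |U r|
  have h1 : (T r).card = (U r).card := by
    apply Finset.card_nbij' (i := fun p => (2 * p.1 - p.2, p.2))
      (j := fun q => ((q.1 + q.2) / 2, q.2))
    · intro p hp
      rw [Finset.mem_coe, mem_T, mem_V, mem_V, mem_V] at hp
      rw [Finset.mem_coe, mem_U]
      simp only at *
      omega
    · intro q hq
      rw [Finset.mem_coe, mem_U] at hq
      rw [Finset.mem_coe, mem_T, mem_V, mem_V, mem_V]
      simp only at *
      omega
    · intro p hp
      rw [Finset.mem_coe, mem_T] at hp
      rw [Prod.ext_iff]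
      exact ⟨by simp only at *; omega, rfl⟩
    · intro q hq
      rw [Finset.mem_coe, mem_U] at hq
      rw [Prod.ext_iff]
      exact ⟨by simp only at *; omega, rfl⟩
  -- step 2: fiberwise over b
  have h2 : (U r).card = ∑ b ∈ Finset.Icc (-r) (r-1), ((U r).filter (fun q => q.2 = b)).card :=
    Finset.card_eq_sum_card_fiberwise (fun q hq => by
      rw [Finset.mem_coe, mem_U] at hq; rw [Finset.mem_coe, Finset.mem_Icc]; exact hq.2.1)
  -- step 3: each fiber card
  have h3 : ∀ b ∈ Finset.Icc (-r) (r-1), (((U r).filter (fun q => q.2 = b)).card : ℤ) =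
      if b % 2 = 0
      then ((2*r-3)/6 - (4-2*r)/6 + 1) + ((2*r-5)/6 - (2-2*r)/6 + 1)
      else ((2*r-2)/6 - (5-2*r)/6 + 1) + ((2*r-6)/6 - (1-2*r)/6 + 1) := by
    intro b hb
    have hf : ((U r).filter (fun q => q.2 = b)).card =
        ((Finset.Icc (1-2*r) (2*r-1)).filter
          (fun u => u % 2 = b % 2 ∧ u % 6 ≠ 3 * (b % 2))).card := by
      apply Finset.card_nbij' (i := Prod.fst) (j := fun u => (u, b))
      · intro q hq
        simp only [Finset.mem_coe, Finset.mem_filter, mem_U] at hq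
        obtain ⟨hq1, rfl⟩ := hq
        simp only [Finset.mem_coe, Finset.mem_filter, Finset.mem_Icc]
        exact ⟨⟨hq1.1.1, hq1.1.2⟩, hq1.2.2⟩
      · intro u hu
        simp only [Finset.mem_coe, Finset.mem_filter, Finset.mem_Icc] at hu
        rw [Finset.mem_Icc] at hb
        simp only [Finset.mem_coe, Finset.mem_filter, mem_U]
        exact ⟨⟨⟨hu.1.1, hu.1.2⟩, hb, hu.2⟩, trivial⟩
      · intro q hq
        simp only [Finset.mem_coe, Finset.mem_filter] at hq
        rw [Prod.ext_iff]
        exact ⟨rfl, hq.2.symm⟩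
      · intro u hu
        rfl
    rw [hf]
    rcases Int.emod_two_eq b with hb2 | hb2 <;> rw [hb2]
    · simp only [if_pos rfl]
      have he : (Finset.Icc (1-2*r) (2*r-1)).filter
            (fun u => u % 2 = 0 ∧ u % 6 ≠ 3 * 0)
          = (Finset.Icc (1-2*r) (2*r-1)).filter (fun u => u % 6 = 2)
            ∪ (Finset.Icc (1-2*r) (2*r-1)).filter (fun u => u % 6 = 4) := by
        rw [← Finset.filter_or]
        apply Finset.filter_congr
        intro u hu
        constructor <;> intro h <;> omega
      rw [he, Finset.card_union_of_disjoint]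
      · push_cast
        rw [count6 _ _ 2 (by norm_num) (by norm_num), count6 _ _ 4 (by norm_num) (by norm_num)]
        omega
      · simp only [Finset.disjoint_left, Finset.mem_filter]
        intro u h1 h2
        omega
    · simp only [if_neg (by norm_num : (1:ℤ) ≠ 0)]
      have he : (Finset.Icc (1-2*r) (2*r-1)).filter
            (fun u => u % 2 = 1 ∧ u % 6 ≠ 3 * 1)
          = (Finset.Icc (1-2*r) (2*r-1)).filter (fun u => u % 6 = 1)
            ∪ (Finset.Icc (1-2*r) (2*r-1)).filter (fun u => u % 6 = 5) := by
        rw [← Finset.filter_or]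
        apply Finset.filter_congr
        intro u hu
        constructor <;> intro h <;> omega
      rw [he, Finset.card_union_of_disjoint]
      · push_cast
        rw [count6 _ _ 1 (by norm_num) (by norm_num), count6 _ _ 5 (by norm_num) (by norm_num)]
        omega
      · simp only [Finset.disjoint_left, Finset.mem_filter]
        intro u h1 h2
        omega
  -- step 4: put it together
  have hcast : ((U r).card : ℤ) = ∑ b ∈ Finset.Icc (-r) (r-1),
      (((U r).filter (fun q => q.2 = b)).card : ℤ) := by
    rw [h2]; push_cast; rfl
  rw [h1, hcast, Finset.sum_congr rfl h3, Finset.sum_ite, Finset.sum_const, Finset.sum_const]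
  have hev : (((Finset.Icc (-r) (r-1)).filter (fun b => b % 2 = 0)).card : ℤ) = r := by
    rw [count2 _ _ 0 le_rfl (by norm_num)]; omega
  have hod : (((Finset.Icc (-r) (r-1)).filter (fun b => ¬ b % 2 = 0)).card : ℤ) = r := by
    have he : (Finset.Icc (-r) (r-1)).filter (fun b => ¬ b % 2 = 0)
        = (Finset.Icc (-r) (r-1)).filter (fun b => b % 2 = 1) := by
      apply Finset.filter_congr; intro b hb; constructor <;> intro h <;> omega
    rw [he, count2 _ _ 1 (by norm_num) (by norm_num)]; omega
  rw [nsmul_eq_mul, nsmul_eq_mul, hev, hod]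
  have key : (((2*r-3)/6 - (4-2*r)/6 + 1) + ((2*r-5)/6 - (2-2*r)/6 + 1))
      + (((2*r-2)/6 - (5-2*r)/6 + 1) + ((2*r-6)/6 - (1-2*r)/6 + 1))
      = 4 * r - (r - 2) / 3 - 2 * ((r - 1) / 3) - (r + 1) / 3 - 3 := by omega
  linear_combination r * key
end

section
/- Lower bound on the number of triangles: for every integer r ≥ 1, 3·|T(r)| ≥ 8r² − 6r (i.e. |T(r)| ≥ (8/3)r² − 2r). -/
lemma key (A B c : ℤ) :
    2 * (B - A + 1) - 2 ≤
      3 * (((Finset.Icc A B).filter (fun a => (a + c) % 3 ≠ 0)).card : ℤ) := by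
  by_cases hAB : A ≤ B
  · have hsplit := Finset.card_filter_add_card_filter_not
      (s := Finset.Icc A B) (p := fun a => (a + c) % 3 = 0)
    have hinj : ((Finset.Icc A B).filter (fun a => (a + c) % 3 = 0)).card
        ≤ (Finset.Icc ((A + c + 2) / 3) ((B + c) / 3)).card := by
      apply Finset.card_le_card_of_injOn (fun a => (a + c) / 3)
      · intro a ha
        simp only [Finset.mem_coe, Finset.mem_filter, Finset.mem_Icc] at ha ⊢
        omega
      · intro a ha b hb hab
        simp only [Finset.mem_coe, Finset.coe_filter, Set.mem_setOf_eq,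
          Finset.mem_Icc] at ha hb
        dsimp only at hab
        omega
    have hIcc1 : (Finset.Icc A B).card = (B + 1 - A).toNat := Int.card_Icc A B
    have hIcc2 : (Finset.Icc ((A + c + 2) / 3) ((B + c) / 3)).card
        = ((B + c) / 3 + 1 - (A + c + 2) / 3).toNat := Int.card_Icc _ _
    have hneg : ((Finset.Icc A B).filter (fun a => ¬ (a + c) % 3 = 0)).card
        = ((Finset.Icc A B).filter (fun a => (a + c) % 3 ≠ 0)).card := rfl
    omega
  · rw [Finset.Icc_eq_empty hAB]
    simp only [Finset.filter_empty, Finset.card_empty, Nat.cast_zero, mul_zero]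
    omega

/-- Lower bound on the number of triangles: `3·|T(r)| ≥ 8r² − 6r`,
i.e. `|T(r)| ≥ (8/3)r² − 2r`. -/
theorem card_T_lower (r : ℤ) (hr : 1 ≤ r) :
    8 * r ^ 2 - 6 * r ≤ 3 * ((T r).card : ℤ) := by
  have hfib : (T r).card = ∑ b ∈ Finset.Icc (-r) (r - 1),
      ((T r).filter (fun p => p.2 = b)).card := by
    apply Finset.card_eq_sum_card_fiberwise
    intro p hp
    simp only [T, V, f, Finset.mem_coe, Finset.mem_filter, Finset.mem_product, Finset.mem_Icc,
      abs_le] at hp ⊢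
    omega
  have hrow : ∀ b ∈ Finset.Icc (-r) (r - 1),
      ((T r).filter (fun p => p.2 = b)).card
      = ((Finset.Icc ((b - 2 * r + 2) / 2) ((b + 2 * r - 1) / 2)).filter
          (fun a => (a + b) % 3 ≠ 0)).card := by
    intro b hb
    simp only [Finset.mem_Icc] at hb
    refine Finset.card_bij' (fun p _ => p.1) (fun a _ => (a, b)) ?_ ?_ ?_ ?_
    · intro p hp
      simp only [T, V, f, Finset.mem_filter, Finset.mem_product, Finset.mem_Icc,
        abs_le] at hp ⊢
      omega
    · intro a ha
      simp only [T, V, f, Finset.mem_filter, Finset.mem_product, Finset.mem_Icc,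
        abs_le, and_true] at ha ⊢
      omega
    · intro p hp
      simp only [Finset.mem_filter] at hp
      exact Prod.ext rfl hp.2.symm
    · intro a ha
      rfl
  have hbound : ∀ b ∈ Finset.Icc (-r) (r - 1),
      4 * r - 4 + 2 * (b % 2) ≤ 3 * (((T r).filter (fun p => p.2 = b)).card : ℤ) := by
    intro b hb
    rw [hrow b hb]
    have := key ((b - 2 * r + 2) / 2) ((b + 2 * r - 1) / 2) b
    omega
  have hsum := Finset.sum_le_sum hbound
  have hmod : ∑ b ∈ Finset.Icc (-r) (r - 1), (b % 2) = r := by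
    have h2 : ∑ b ∈ Finset.Icc (-r) (r - 1), ((-1 - b) % 2)
        = ∑ b ∈ Finset.Icc (-r) (r - 1), (b % 2) := by
      apply Finset.sum_nbij' (i := fun b => -1 - b) (j := fun b => -1 - b) <;>
        intro a ha <;> simp only [Finset.mem_Icc] at * <;> omega
    have h3 : ∑ b ∈ Finset.Icc (-r) (r - 1), ((b % 2) + ((-1 - b) % 2))
        = ∑ b ∈ Finset.Icc (-r) (r - 1), (1 : ℤ) := by
      apply Finset.sum_congr rfl
      intro b hb
      omega
    rw [Finset.sum_add_distrib, h2, Finset.sum_const, Int.card_Icc,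
      nsmul_eq_mul, mul_one] at h3
    omega
  have hL : ∑ b ∈ Finset.Icc (-r) (r - 1), (4 * r - 4 + 2 * (b % 2))
      = 8 * r ^ 2 - 6 * r := by
    rw [Finset.sum_add_distrib, Finset.sum_const, ← Finset.mul_sum, hmod, Int.card_Icc]
    have : ((r - 1 + 1 - -r).toNat : ℤ) = 2 * r := by omega
    rw [nsmul_eq_mul, this]
    ring
  have hR : ∑ b ∈ Finset.Icc (-r) (r - 1),
      3 * (((T r).filter (fun p => p.2 = b)).card : ℤ) = 3 * ((T r).card : ℤ) := by
    rw [← Finset.mul_sum, hfib]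
    push_cast
    ring
  rw [hL, hR] at hsum
  exact hsum
end

section
/- Linear bound on the number of boundary vertices: for every integer r ≥ 1, |V_ex(r)| ≤ 12r + 2. -/
lemma mem_V_iff (r a b : ℤ) :
    (a, b) ∈ V r ↔ -(2*r) ≤ 2*a - b ∧ 2*a - b ≤ 2*r ∧ -r ≤ b ∧ b ≤ r := by
  simp only [V, Finset.mem_filter, Finset.mem_product, Finset.mem_Icc, abs_le]
  omega

lemma mem_T_s7 (r a b : ℤ) (hf : (a + b) % 3 ≠ 0)
    (h1 : -(2*r) ≤ 2*a - b - 1) (h2 : 2*a - b + 1 ≤ 2*r) (h3 : -r ≤ b) (h4 : b + 1 ≤ r) :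
    (a, b) ∈ T r := by
  simp only [T, Finset.mem_filter]
  refine ⟨(mem_V_iff r a b).2 (by omega), by simpa [f] using hf, ?_, ?_⟩
  · exact (mem_V_iff r a (b+1)).2 (by omega)
  · exact (mem_V_iff r (a+1) (b+1)).2 (by omega)

lemma two_le_nTri (r a b : ℤ)
    (h1 : -(2*r - 2) ≤ 2*a - b) (h2 : 2*a - b ≤ 2*r - 2)
    (h3 : -(r-1) ≤ b) (h4 : b ≤ r - 1) :
    2 ≤ nTri r (a, b) := by
  have v1 : (a, b) ∈ triVerts (a, b) := by simp [triVerts]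
  have v2 : (a, b) ∈ triVerts (a, b - 1) := by
    simp only [triVerts, Finset.mem_insert, Finset.mem_singleton, Prod.mk.injEq, true_and]
    omega
  have v3 : (a, b) ∈ triVerts (a - 1, b - 1) := by
    simp only [triVerts, Finset.mem_insert, Finset.mem_singleton, Prod.mk.injEq]
    omega
  have key : ∀ p q : ℤ × ℤ, p ≠ q → p ∈ (T r).filter (fun p => (a,b) ∈ triVerts p) →
      q ∈ (T r).filter (fun p => (a,b) ∈ triVerts p) → 2 ≤ nTri r (a, b) := by
    intro p q hne hp hq
    exact Finset.one_lt_card.2 ⟨p, hp, q, hq, hne⟩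
  rcases (by omega : (a+b) % 3 = 0 ∨ (a+b) % 3 = 1 ∨ (a+b) % 3 = 2) with h | h | h
  · refine key (a, b-1) (a-1, b-1) (by simp only [ne_eq, Prod.mk.injEq]; omega) ?_ ?_
    · exact Finset.mem_filter.2 ⟨mem_T_s7 r a (b-1) (by omega) (by omega) (by omega) (by omega) (by omega), v2⟩
    · exact Finset.mem_filter.2 ⟨mem_T_s7 r (a-1) (b-1) (by omega) (by omega) (by omega) (by omega) (by omega), v3⟩
  · refine key (a, b) (a-1, b-1) (by simp only [ne_eq, Prod.mk.injEq]; omega) ?_ ?_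
    · exact Finset.mem_filter.2 ⟨mem_T_s7 r a b (by omega) (by omega) (by omega) (by omega) (by omega), v1⟩
    · exact Finset.mem_filter.2 ⟨mem_T_s7 r (a-1) (b-1) (by omega) (by omega) (by omega) (by omega) (by omega), v3⟩
  · refine key (a, b) (a, b-1) (by simp only [ne_eq, Prod.mk.injEq]; omega) ?_ ?_
    · exact Finset.mem_filter.2 ⟨mem_T_s7 r a b (by omega) (by omega) (by omega) (by omega) (by omega), v1⟩
    · exact Finset.mem_filter.2 ⟨mem_T_s7 r a (b-1) (by omega) (by omega) (by omega) (by omega) (by omega), v2⟩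

/-- Explicit boundary superset of `Vex r`: six line segments. -/
noncomputable def B (r : ℤ) : Finset (ℤ × ℤ) :=
  ((Finset.Icc (-(r/2)) (r + r/2)).image (fun a => (a, r))) ∪
  ((Finset.Icc (-(r + r/2)) (r/2)).image (fun a => (a, -r))) ∪
  ((Finset.Icc ((r+1)/2) (r + r/2)).image (fun a => (a, 2*a - 2*r))) ∪
  ((Finset.Icc (r/2) ((3*r-1)/2)).image (fun a => (a, 2*a - (2*r-1)))) ∪
  ((Finset.Icc (-(r + r/2)) (-((r+1)/2))).image (fun a => (a, 2*a + 2*r))) ∪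
  ((Finset.Icc (-((3*r-1)/2)) (-((r-1)/2))).image (fun a => (a, 2*a + (2*r-1))))

lemma Vex_subset_B (r : ℤ) (hr : 1 ≤ r) : Vex r ⊆ B r := by
  intro v hv
  obtain ⟨a, b⟩ := v
  rw [Vex, Finset.mem_filter, mem_V_iff] at hv
  obtain ⟨⟨h1, h2, h3, h4⟩, hn⟩ := hv
  have hbd : ¬(-(2*r - 2) ≤ 2*a - b ∧ 2*a - b ≤ 2*r - 2 ∧ -(r-1) ≤ b ∧ b ≤ r - 1) := by
    rintro ⟨k1, k2, k3, k4⟩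
    exact absurd (two_le_nTri r a b k1 k2 k3 k4) (by omega)
  have hcases : b = r ∨ b = -r ∨ 2*a - b = 2*r ∨ 2*a - b = 2*r - 1 ∨
      2*a - b = -(2*r) ∨ 2*a - b = -(2*r - 1) := by omega
  simp only [B, Finset.mem_union, Finset.mem_image, Finset.mem_Icc, Prod.mk.injEq]
  rcases hcases with h | h | h | h | h | h
  · exact Or.inl <| Or.inl <| Or.inl <| Or.inl <| Or.inl ⟨a, by omega, rfl, by omega⟩
  · exact Or.inl <| Or.inl <| Or.inl <| Or.inl <| Or.inr ⟨a, by omega, rfl, by omega⟩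
  · exact Or.inl <| Or.inl <| Or.inl <| Or.inr ⟨a, by omega, rfl, by omega⟩
  · exact Or.inl <| Or.inl <| Or.inr ⟨a, by omega, rfl, by omega⟩
  · exact Or.inl <| Or.inr ⟨a, by omega, rfl, by omega⟩
  · exact Or.inr ⟨a, by omega, rfl, by omega⟩

lemma card_B_le (r : ℤ) (hr : 1 ≤ r) : ((B r).card : ℤ) ≤ 12 * r + 2 := by
  have hB : (B r).card ≤
      (Finset.Icc (-(r/2)) (r + r/2)).card + (Finset.Icc (-(r + r/2)) (r/2)).card +
      (Finset.Icc ((r+1)/2) (r + r/2)).card + (Finset.Icc (r/2) ((3*r-1)/2)).card +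
      (Finset.Icc (-(r + r/2)) (-((r+1)/2))).card +
      (Finset.Icc (-((3*r-1)/2)) (-((r-1)/2))).card := by
    unfold B
    refine (Finset.card_union_le _ _).trans (Nat.add_le_add ?_ Finset.card_image_le)
    refine (Finset.card_union_le _ _).trans (Nat.add_le_add ?_ Finset.card_image_le)
    refine (Finset.card_union_le _ _).trans (Nat.add_le_add ?_ Finset.card_image_le)
    refine (Finset.card_union_le _ _).trans (Nat.add_le_add ?_ Finset.card_image_le)
    exact (Finset.card_union_le _ _).trans (Nat.add_le_add Finset.card_image_le Finset.card_image_le)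
  simp only [Int.card_Icc] at hB
  omega

/-- Linear bound on the number of boundary vertices: `|V_ex(r)| ≤ 12r + 2`. -/
theorem card_Vex_le_linear (r : ℤ) (hr : 1 ≤ r) :
    ((Vex r).card : ℤ) ≤ 12 * r + 2 := by
  have h1 := Finset.card_le_card (Vex_subset_B r hr)
  have h2 := card_B_le r hr
  omega
end

section
/- In-degree structure under the left-to-right, top-down decoding order: let r ≥ 1 and let u = (a,b) ∈ V(r). Define N⁺(u) = {v ∈ V(r) : {u,v} ∈ E(r) and u ≺ v}. Then: if f(u) = 1 then N⁺(u) ⊆ {(a−1,b−1)}; if f(u) = 2 then N⁺(u) ⊆ {(a+1,b), (a,b−1)}; and if f(u) = 0 then N⁺(u) ⊆ {(a+1,b), (a,b−1), (a−1,b−1)}. In particular |N⁺(u)| ≤ 1, 2, 3 in the three cases respectively. -/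
/-- Adjacency (edge) relation of the cellular interference graph: `{u,v}` is an
edge iff `u, v ∈ V r` and there is `(a,b) ∈ ℤ²` with `(a+b) mod 3 ≠ 0` such that
`{u,v}` is one of `{(a,b),(a,b+1)}`, `{(a,b),(a+1,b+1)}`, `{(a,b+1),(a+1,b+1)}`. -/
def Adj (r : ℤ) (u v : ℤ × ℤ) : Prop :=
  u ∈ V r ∧ v ∈ V r ∧ ∃ a b : ℤ, (a + b) % 3 ≠ 0 ∧
    ( ({u, v} : Set (ℤ × ℤ)) = {(a, b), (a, b + 1)} ∨
      ({u, v} : Set (ℤ × ℤ)) = {(a, b), (a + 1, b + 1)} ∨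
      ({u, v} : Set (ℤ × ℤ)) = {(a, b + 1), (a + 1, b + 1)} )

/-- The "left-to-right, top-down" decoding order: `prec u v` (i.e. `u ≺ v`) iff
`u.2 > v.2`, or `u.2 = v.2` and `u.1 < v.1`. -/
def prec (u v : ℤ × ℤ) : Prop := v.2 < u.2 ∨ (u.2 = v.2 ∧ u.1 < v.1)

lemma key_lemma (r a b : ℤ) (v : ℤ × ℤ) (h : Adj r (a, b) v) (hp : prec (a, b) v) :
    ((a + b - 1) % 3 ≠ 0 ∧ (v = (a + 1, b) ∨ v = (a, b - 1))) ∨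
      ((a + b - 2) % 3 ≠ 0 ∧ v = (a - 1, b - 1)) := by
  obtain ⟨-, -, a', b', h3, hc⟩ := h
  obtain ⟨v1, v2⟩ := v
  simp only [prec] at hp
  rcases hc with hc | hc | hc <;>
  · rw [Set.pair_eq_pair_iff] at hc
    simp only [Prod.mk.injEq, Prod.ext_iff] at hc ⊢
    omega

/-- **In-degree structure under the left-to-right, top-down decoding order.**
For `u = (a,b) ∈ V(r)` let `N⁺(u) = {v ∈ V(r) : {u,v} ∈ E(r) ∧ u ≺ v}`. Then
`N⁺(u) ⊆ {(a−1,b−1)}` if `f(u) = 1`, `N⁺(u) ⊆ {(a+1,b),(a,b−1)}` if `f(u) = 2`,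
and `N⁺(u) ⊆ {(a+1,b),(a,b−1),(a−1,b−1)}` if `f(u) = 0`; in particular
`|N⁺(u)| ≤ 1, 2, 3` respectively. -/
theorem in_degree_structure (r : ℤ) (hr : 1 ≤ r) (a b : ℤ)
    (hu : (a, b) ∈ V r) :
    (f (a, b) = 1 →
      {v : ℤ × ℤ | v ∈ V r ∧ Adj r (a, b) v ∧ prec (a, b) v} ⊆
        {(a - 1, b - 1)}) ∧
    (f (a, b) = 2 →
      {v : ℤ × ℤ | v ∈ V r ∧ Adj r (a, b) v ∧ prec (a, b) v} ⊆
        {(a + 1, b), (a, b - 1)}) ∧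
    (f (a, b) = 0 →
      {v : ℤ × ℤ | v ∈ V r ∧ Adj r (a, b) v ∧ prec (a, b) v} ⊆
        {(a + 1, b), (a, b - 1), (a - 1, b - 1)}) := by
  refine ⟨fun hf v hv => ?_, fun hf v hv => ?_, fun hf v hv => ?_⟩ <;>
  · obtain ⟨-, hadj, hp⟩ := hv
    have hk := key_lemma r a b v hadj hp
    simp only [f] at hf
    simp only [Set.mem_singleton_iff, Set.mem_insert_iff]
    obtain ⟨v1, v2⟩ := v
    simp only [Prod.mk.injEq] at hk ⊢
    omega
end

section
/- At most one later-decoded neighbor in the cosets k = 0 and k = 2: let r ≥ 1 and k ∈ {0,2}, and set V_k(r) = {v ∈ V(r) : f(v) = k}. Then for every u ∈ V(r), the set {v ∈ V_k(r) : {u,v} ∈ E(r) and u ≺ v} has at most one element. (This is the condition that allows each user in V_k(r) to carry one extra data stream in the odd-M achievability scheme.) -/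
lemma adj_cases {r : ℤ} {u v : ℤ × ℤ} (h : Adj r u v) (hp : prec u v) :
    (v = (u.1 + 1, u.2) ∧ (u.1 + u.2) % 3 ≠ 1) ∨
    (v = (u.1, u.2 - 1) ∧ (u.1 + u.2) % 3 ≠ 1) ∨
    (v = (u.1 - 1, u.2 - 1) ∧ (u.1 + u.2) % 3 ≠ 2) := by
  obtain ⟨-, -, a, b, hab, hc | hc | hc⟩ := h <;>
    rw [Set.pair_eq_pair_iff] at hc <;>
    obtain ⟨h1, h2⟩ | ⟨h1, h2⟩ := hc <;>
    obtain ⟨u1, u2⟩ := u <;> obtain ⟨v1, v2⟩ := v <;>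
    simp only [Prod.mk.injEq] at h1 h2 <;>
    obtain ⟨e1, e2⟩ := h1 <;> obtain ⟨e3, e4⟩ := h2 <;>
    rcases hp with hp | ⟨hp1, hp2⟩ <;>
    simp only [Prod.mk.injEq] <;>
    omega

/-- **At most one later-decoded neighbor in the cosets `k = 0` and `k = 2`.**
For `k ∈ {0,2}` and `V_k(r) = {v ∈ V(r) : f(v) = k}`, every `u ∈ V(r)` has at
most one neighbor `v ∈ V_k(r)` with `u ≺ v`. -/
theorem at_most_one_later_neighbor (r : ℤ) (hr : 1 ≤ r) (k : ℤ)
    (hk : k = 0 ∨ k = 2) (u : ℤ × ℤ) (hu : u ∈ V r) :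
    {v : ℤ × ℤ | v ∈ V r ∧ f v = k ∧ Adj r u v ∧ prec u v}.Subsingleton := by
  intro v hv w hw
  obtain ⟨-, hfv, hav, hpv⟩ := hv
  obtain ⟨-, hfw, haw, hpw⟩ := hw
  have Hv := adj_cases hav hpv
  have Hw := adj_cases haw hpw
  unfold f at hfv hfw
  rcases Hv with ⟨rfl, h1⟩ | ⟨rfl, h1⟩ | ⟨rfl, h1⟩ <;>
    rcases Hw with ⟨rfl, h2⟩ | ⟨rfl, h2⟩ | ⟨rfl, h2⟩ <;>
    simp only [Prod.mk.injEq] <;> simp only at hfv hfw <;> omega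
end

section
/- Combinatorial core of the compound converse (Theorem 5): let r ≥ 1 and M ≥ 1 be integers, define T̂(r) = {(a,b) ∈ ℤ² : (a+b) mod 3 = 2 and all three points (a,b), (a,b+1), (a+1,b+1) lie in V(r)} with the triangle indexed by (a,b) having vertex set {(a,b), (a,b+1), (a+1,b+1)}, and let V̂_ex(r) = {v ∈ V(r) : v belongs to no triangle of T̂(r)}. For any d : V(r) → ℕ satisfying d_v ≤ M for every v ∈ V(r) and d_u + d_v ≤ M for every edge {u,v} ∈ E(r), one has Σ_{v ∈ V(r)} d_v ≤ ⌊3M/2⌋·|T̂(r)| + M·|V̂_ex(r)|. -/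
/-- The disjoint triangle packing `T̂(r)`: indices `(a,b)` with
`(a+b) mod 3 = 2` such that all of `(a,b)`, `(a,b+1)`, `(a+1,b+1)` lie in `V r`. -/
noncomputable def That (r : ℤ) : Finset (ℤ × ℤ) :=
  (V r).filter (fun p => f p = 2 ∧ (p.1, p.2 + 1) ∈ V r ∧ (p.1 + 1, p.2 + 1) ∈ V r)

/-- Vertices of `V(r)` belonging to no triangle of `T̂(r)`. -/
noncomputable def VexHat (r : ℤ) : Finset (ℤ × ℤ) :=
  (V r).filter (fun v => ∀ p ∈ That r, v ∉ triVerts p)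

lemma mem_triVerts {v p : ℤ × ℤ} :
    v ∈ triVerts p ↔ v = p ∨ v = (p.1, p.2 + 1) ∨ v = (p.1 + 1, p.2 + 1) := by
  simp [triVerts]

lemma tri_disjoint (r : ℤ) : (↑(That r) : Set (ℤ × ℤ)).PairwiseDisjoint triVerts := by
  intro p hp q hq hpq
  simp only [Finset.coe_filter, Set.mem_setOf_eq, That, Finset.mem_filter] at hp hq
  obtain ⟨-, hfp, -, -⟩ := hp
  obtain ⟨-, hfq, -, -⟩ := hq
  obtain ⟨p1, p2⟩ := p
  obtain ⟨q1, q2⟩ := q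
  simp only [f] at hfp hfq
  rw [Function.onFun, Finset.disjoint_left]
  intro v hvp hvq
  rw [mem_triVerts] at hvp hvq
  apply hpq
  rcases hvp with h | h | h <;> rcases hvq with h' | h' | h' <;> subst h <;>
    simp only [Prod.mk.injEq] at h' ⊢ <;> omega

lemma tri_sum_s19 (r : ℤ) (M : ℕ) (d : ℤ × ℤ → ℕ)
    (hedge : ∀ u v : ℤ × ℤ, Adj r u v → d u + d v ≤ M)
    {p : ℤ × ℤ} (hp : p ∈ That r) :
    ∑ v ∈ triVerts p, d v ≤ 3 * M / 2 := by
  obtain ⟨hpV, hf2, h2V, h3V⟩ := Finset.mem_filter.mp hp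
  unfold f at hf2
  have hne : (p.1 + p.2) % 3 ≠ 0 := by omega
  have e1 : d p + d (p.1, p.2 + 1) ≤ M := by
    refine hedge _ _ ⟨hpV, h2V, p.1, p.2, hne, Or.inl ?_⟩
    rfl
  have e2 : d p + d (p.1 + 1, p.2 + 1) ≤ M := by
    refine hedge _ _ ⟨hpV, h3V, p.1, p.2, hne, Or.inr (Or.inl ?_)⟩
    rfl
  have e3 : d (p.1, p.2 + 1) + d (p.1 + 1, p.2 + 1) ≤ M := by
    refine hedge _ _ ⟨h2V, h3V, p.1, p.2, hne, Or.inr (Or.inr ?_)⟩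
    rfl
  have hsum : ∑ v ∈ triVerts p, d v = d p + d (p.1, p.2 + 1) + d (p.1 + 1, p.2 + 1) := by
    rw [triVerts, Finset.sum_insert, Finset.sum_insert, Finset.sum_singleton, add_assoc]
    · simp only [Finset.mem_singleton, Prod.ext_iff]; omega
    · simp only [Finset.mem_insert, Finset.mem_singleton, Prod.ext_iff]
      push_neg
      constructor <;> intro h <;> omega
  rw [Nat.le_div_iff_mul_le (by norm_num)]
  omega

/-- **Combinatorial core of the compound converse (Theorem 5).** If
`d : V(r) → ℕ` satisfies `d_v ≤ M` for all `v ∈ V(r)` and `d_u + d_v ≤ M` on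
every edge, then `Σ_{v ∈ V(r)} d_v ≤ ⌊3M/2⌋·|T̂(r)| + M·|V̂_ex(r)|`
(natural division is floor). -/
theorem compound_converse_core (r : ℤ) (hr : 1 ≤ r) (M : ℕ) (hM : 1 ≤ M)
    (d : ℤ × ℤ → ℕ)
    (hd : ∀ v ∈ V r, d v ≤ M)
    (hedge : ∀ u v : ℤ × ℤ, Adj r u v → d u + d v ≤ M) :
    ∑ v ∈ V r, d v ≤ (3 * M / 2) * (That r).card + M * (VexHat r).card := by
  classical
  have hsplit : ∑ v ∈ V r, d v
      = ∑ v ∈ VexHat r, d v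
        + ∑ v ∈ (V r).filter (fun v => ¬ ∀ p ∈ That r, v ∉ triVerts p), d v := by
    rw [VexHat, Finset.sum_filter_add_sum_filter_not]
  have hcov : (V r).filter (fun v => ¬ ∀ p ∈ That r, v ∉ triVerts p)
      = (That r).biUnion triVerts := by
    ext v
    simp only [Finset.mem_filter, Finset.mem_biUnion, not_forall]
    constructor
    · rintro ⟨-, p, hp, hv⟩
      exact ⟨p, hp, not_not.mp hv⟩
    · rintro ⟨p, hp, hv⟩
      obtain ⟨hpV, -, h2V, h3V⟩ := Finset.mem_filter.mp hp
      refine ⟨?_, p, hp, not_not.mpr hv⟩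
      rcases mem_triVerts.mp hv with h | h | h <;> subst h <;> assumption
  have hbi : ∑ v ∈ (That r).biUnion triVerts, d v
      = ∑ p ∈ That r, ∑ v ∈ triVerts p, d v :=
    Finset.sum_biUnion (tri_disjoint r)
  have h1 : ∑ v ∈ VexHat r, d v ≤ M * (VexHat r).card := by
    rw [mul_comm]
    refine Finset.sum_le_card_nsmul _ _ M ?_ |>.trans_eq (by simp [mul_comm])
    intro v hv
    exact hd v (Finset.mem_filter.mp hv).1
  have h2 : ∑ p ∈ That r, ∑ v ∈ triVerts p, d v ≤ (3 * M / 2) * (That r).card := by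
    refine Finset.sum_le_card_nsmul _ _ (3 * M / 2)
      (fun p hp => tri_sum_s19 r M d hedge hp) |>.trans_eq (by simp [mul_comm])
  rw [hcov, hbi] at hsplit
  omega
end
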